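/- For any SAM F : ℝ^d × S → {subsets of ℝ^k} there exists a sequence of continuous single-valued maps f^{(l)} : ℝ^d × S × U → ℝ^k, l ≥ 1, such that: (i) for every (x,y,s), F(x,y,s) ⊆ f^{(l+1)}(x,y,s,U) ⊆ f^{(l)}(x,y,s,U), where f^{(l)}(x,y,s,U) := {f^{(l)}(x,y,s,u) : u ∈ U}, and each image f^{(l)}(x,y,s,U) is a convex compact subset of ℝ^k; (ii) there exist constants K^{(l)} > 0 with ‖f^{(l)}(x,y,s,u)‖ ≤ K^{(l)}(1+‖(x,y)‖) for all (x,y,s,u); and furthermore ⋂_{l≥1} f^{(l)}(x,y,s,U) = F(x,y,s) for every (x,y,s). -/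

import Mathlib

open MeasureTheory Metric Filter Topology
open scoped Pointwise NNReal ENNReal RealInnerProductSpace

abbrev Euc (n : ℕ) : Type := EuclideanSpace ℝ (Fin n)

/-! ### Metric projection onto a closed convex set -/

open scoped Classical in
noncomputable def projC {k : ℕ} (C : Set (Euc k)) (x : Euc k) : Euc k :=
  if h : ∃ v ∈ C, ∀ w ∈ C, ⟪x - v, w - v⟫ ≤ 0 then h.choose else 0

lemma projC_spec {k : ℕ} {C : Set (Euc k)} (hne : C.Nonempty) (hcl : IsClosed C)
    (hcv : Convex ℝ C) (x : Euc k) :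
    projC C x ∈ C ∧ ∀ w ∈ C, ⟪x - projC C x, w - projC C x⟫ ≤ 0 := by
  have h : ∃ v ∈ C, ∀ w ∈ C, ⟪x - v, w - v⟫ ≤ 0 := by
    obtain ⟨v, hv, hmin⟩ := exists_norm_eq_iInf_of_complete_convex hne hcl.isComplete hcv x
    exact ⟨v, hv, (norm_eq_iInf_iff_real_inner_le_zero hcv hv).1 hmin⟩
  classical
  rw [projC]
  rw [dif_pos h]
  exact ⟨h.choose_spec.1, h.choose_spec.2⟩

lemma projC_eq_self {k : ℕ} {C : Set (Euc k)} (hne : C.Nonempty) (hcl : IsClosed C)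
    (hcv : Convex ℝ C) {z : Euc k} (hz : z ∈ C) : projC C z = z := by
  have h := (projC_spec hne hcl hcv z).2 z hz
  have h2 : z - projC C z = 0 := real_inner_self_nonpos.mp h
  have := sub_eq_zero.mp h2
  exact this.symm

lemma projC_estimate {k : ℕ} {C D : Set (Euc k)}
    (hCne : C.Nonempty) (hCcl : IsClosed C) (hCcv : Convex ℝ C)
    (hDne : D.Nonempty) (hDcl : IsClosed D) (hDcv : Convex ℝ D)
    (x y : Euc k) {r : ℝ}
    (hCD : ∀ z ∈ C, ∃ w ∈ D, ‖z - w‖ ≤ r)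
    (hDC : ∀ z ∈ D, ∃ w ∈ C, ‖z - w‖ ≤ r) :
    ‖projC C x - projC D y‖ ^ 2 ≤
      r * (‖x - projC C x‖ + ‖y - projC D y‖) +
        ‖x - y‖ * ‖projC C x - projC D y‖ := by
  obtain ⟨ha, hvi⟩ := projC_spec hCne hCcl hCcv x
  obtain ⟨hb, hvi'⟩ := projC_spec hDne hDcl hDcv y
  set a := projC C x with hadef
  set b := projC D y with hbdef
  obtain ⟨b', hb'C, hbb'⟩ := hDC b hb
  obtain ⟨a', ha'D, haa'⟩ := hCD a ha
  have h1 : ⟪x - a, b' - a⟫ ≤ 0 := hvi b' hb'C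
  have h2 : ⟪y - b, a' - b⟫ ≤ 0 := hvi' a' ha'D
  have expand : ‖a - b‖ ^ 2 = ⟪x - a, b - a⟫ + ⟪x - y, a - b⟫ + ⟪y - b, a - b⟫ := by
    rw [← real_inner_self_eq_norm_sq]
    simp only [inner_sub_left, inner_sub_right]
    ring
  have e1 : ⟪x - a, b - a⟫ ≤ ‖x - a‖ * r := by
    have hdec : b - a = (b' - a) + (b - b') := by abel
    rw [hdec, inner_add_right]
    have h3 : ⟪x - a, b - b'⟫ ≤ ‖x - a‖ * ‖b - b'‖ := real_inner_le_norm _ _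
    have h4 : ‖x - a‖ * ‖b - b'‖ ≤ ‖x - a‖ * r :=
      mul_le_mul_of_nonneg_left hbb' (norm_nonneg _)
    linarith
  have e2 : ⟪y - b, a - b⟫ ≤ ‖y - b‖ * r := by
    have hdec : a - b = (a' - b) + (a - a') := by abel
    rw [hdec, inner_add_right]
    have h3 : ⟪y - b, a - a'⟫ ≤ ‖y - b‖ * ‖a - a'‖ := real_inner_le_norm _ _
    have h4 : ‖y - b‖ * ‖a - a'‖ ≤ ‖y - b‖ * r :=
      mul_le_mul_of_nonneg_left haa' (norm_nonneg _)
    linarith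
  have e3 : ⟪x - y, a - b⟫ ≤ ‖x - y‖ * ‖a - b‖ := real_inner_le_norm _ _
  nlinarith [expand, e1, e2, e3]

/-! ### Pointwise finite sums of sets -/

section SetSums

variable {E : Type*} [NormedAddCommGroup E] [NormedSpace ℝ E] {ι : Type*}

lemma sum_smul_mem_pointwise {T : Finset ι} {ψ : ι → ℝ} {A : ι → Set E}
    (hA : ∀ i ∈ T, (A i).Nonempty) (z : E) (hz : ∀ i ∈ T, ψ i ≠ 0 → z ∈ A i) :
    (∑ i ∈ T, ψ i) • z ∈ ∑ i ∈ T, ψ i • A i := by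
  rw [Finset.sum_smul]
  refine Set.finset_sum_mem_finset_sum T _ _ ?_
  intro i hi
  by_cases h : ψ i = 0
  · rw [h, zero_smul, Set.zero_smul_set (hA i hi)]
    exact Set.zero_mem_zero
  · exact Set.smul_mem_smul_set (hz i hi h)

lemma sum_smul_subset_pointwise {T : Finset ι} {ψ : ι → ℝ} {A : ι → Set E} {D : Set E}
    (hψ : ∀ i ∈ T, 0 ≤ ψ i) (hA : ∀ i ∈ T, (A i).Nonempty)
    (hD : Convex ℝ D) (hDne : D.Nonempty) (hsub : ∀ i ∈ T, ψ i ≠ 0 → A i ⊆ D) :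
    ∑ i ∈ T, ψ i • A i ⊆ (∑ i ∈ T, ψ i) • D := by
  classical
  revert hψ hA hsub
  refine Finset.induction_on T ?_ ?_
  · intro _ _ _
    simp only [Finset.sum_empty]
    rw [Set.zero_smul_set hDne]
  · intro i T hi ih hψ hA hsub
    simp only [Finset.sum_insert hi]
    have h1 : ψ i • A i ⊆ ψ i • D := by
      by_cases h : ψ i = 0
      · rw [h, Set.zero_smul_set (hA i (Finset.mem_insert_self i T)),
          Set.zero_smul_set hDne]
      · exact Set.smul_set_mono (hsub i (Finset.mem_insert_self i T) h)
    have h2 := ih (fun j hj => hψ j (Finset.mem_insert_of_mem hj))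
      (fun j hj => hA j (Finset.mem_insert_of_mem hj))
      (fun j hj => hsub j (Finset.mem_insert_of_mem hj))
    calc ψ i • A i + ∑ j ∈ T, ψ j • A j
        ⊆ ψ i • D + (∑ j ∈ T, ψ j) • D := Set.add_subset_add h1 h2
      _ = (ψ i + ∑ j ∈ T, ψ j) • D :=
          (hD.add_smul (hψ i (Finset.mem_insert_self i T))
            (Finset.sum_nonneg fun j hj => hψ j (Finset.mem_insert_of_mem hj))).symm

lemma sum_smul_pair {T : Finset ι} (a b : ι → ℝ) (A : ι → Set E) {M : ℝ}
    (hM : ∀ i ∈ T, ∀ c ∈ A i, ‖c‖ ≤ M) {z : E}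
    (hz : z ∈ ∑ i ∈ T, a i • A i) :
    ∃ w ∈ ∑ i ∈ T, b i • A i, ‖z - w‖ ≤ ∑ i ∈ T, |a i - b i| * M := by
  classical
  obtain ⟨g, hg, hsum⟩ := (Set.mem_finset_sum T _ z).mp hz
  have hexists : ∀ i : ι, ∃ c : E, i ∈ T → (c ∈ A i ∧ g i = a i • c) := by
    intro i
    by_cases hi : i ∈ T
    · obtain ⟨c, hc, hgc⟩ := Set.mem_smul_set.mp (hg hi)
      exact ⟨c, fun _ => ⟨hc, hgc.symm⟩⟩
    · exact ⟨0, fun h => absurd h hi⟩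
  choose c hc using hexists
  refine ⟨∑ i ∈ T, b i • c i,
    Set.finset_sum_mem_finset_sum T _ _ (fun i hi => Set.smul_mem_smul_set (hc i hi).1), ?_⟩
  have hdiff : z - ∑ i ∈ T, b i • c i = ∑ i ∈ T, (a i - b i) • c i := by
    rw [← hsum]
    rw [← Finset.sum_sub_distrib]
    refine Finset.sum_congr rfl fun i hi => ?_
    rw [(hc i hi).2, sub_smul]
  rw [hdiff]
  refine (norm_sum_le _ _).trans ?_
  refine Finset.sum_le_sum fun i hi => ?_
  rw [norm_smul, Real.norm_eq_abs]
  exact mul_le_mul_of_nonneg_left (hM i hi _ (hc i hi).1) (abs_nonneg _)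

lemma convex_finsetSum {T : Finset ι} {A : ι → Set E} (h : ∀ i ∈ T, Convex ℝ (A i)) :
    Convex ℝ (∑ i ∈ T, A i) := by
  classical
  revert h
  refine Finset.induction_on T ?_ ?_
  · intro _
    simp only [Finset.sum_empty]
    exact convex_singleton 0
  · intro i T hi ih h
    simp only [Finset.sum_insert hi]
    exact (h i (Finset.mem_insert_self i T)).add
      (ih fun j hj => h j (Finset.mem_insert_of_mem hj))

lemma isCompact_finsetSum {T : Finset ι} {A : ι → Set E} (h : ∀ i ∈ T, IsCompact (A i)) :
    IsCompact (∑ i ∈ T, A i) := by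
  classical
  revert h
  refine Finset.induction_on T ?_ ?_
  · intro _
    simp only [Finset.sum_empty]
    exact isCompact_singleton
  · intro i T hi ih h
    simp only [Finset.sum_insert hi]
    have h1 : IsCompact (A i) := h i (Finset.mem_insert_self i T)
    have h2 : IsCompact (∑ j ∈ T, A j) := ih fun j hj => h j (Finset.mem_insert_of_mem hj)
    rw [← Set.image2_add, ← Set.image_prod]
    exact (h1.prod h2).image (by continuity)

lemma smul_set_iInter₀ {c : ℝ} (hc : c ≠ 0) (A : ℕ → Set E) :
    (c • ⋂ i, A i) = ⋂ i, c • A i := by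
  have hbij : Function.Bijective (fun x : E => c • x) :=
    ⟨smul_right_injective E hc, fun y => ⟨c⁻¹ • y, smul_inv_smul₀ hc y⟩⟩
  simpa only [Set.image_smul] using Set.image_iInter hbij A

end SetSums

/-! ### The approximation theorem over a compact base space -/

set_option maxHeartbeats 2000000 in
theorem sam_aux (k : ℕ) (X : Type) [MetricSpace X] [CompactSpace X] [Nonempty X]
    (F : X → Set (Euc k))
    (hne : ∀ x, (F x).Nonempty)
    (hconv : ∀ x, Convex ℝ (F x))
    (hcomp : ∀ x, IsCompact (F x))
    (hgraph : ∀ (x : X) (xn : ℕ → X) (zn : ℕ → Euc k) (z : Euc k),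
      Tendsto xn atTop (𝓝 x) → (∀ n, zn n ∈ F (xn n)) → Tendsto zn atTop (𝓝 z) →
      z ∈ F x)
    (K : ℝ) (hK : 0 < K) (hbd : ∀ x, ∀ z ∈ F x, ‖z‖ ≤ K) :
    ∃ f : ℕ → X → (closedBall (0 : Euc k) 1 : Set (Euc k)) → Euc k,
      (∀ l, Continuous (fun q : X × (closedBall (0 : Euc k) 1 : Set (Euc k)) =>
        f l q.1 q.2)) ∧
      (∀ l x, F x ⊆ Set.range (f (l + 1) x) ∧
        Set.range (f (l + 1) x) ⊆ Set.range (f l x)) ∧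
      (∀ l x, Convex ℝ (Set.range (f l x)) ∧ IsCompact (Set.range (f l x))) ∧
      (∀ l x u, ‖f l x u‖ ≤ K) ∧
      (∀ x, (⋂ l : ℕ, Set.range (f l x)) = F x) := by
  classical
  -- scales
  set δ : ℕ → ℝ := fun l => (1/3 : ℝ) ^ l with hδdef
  have hδpos : ∀ l, 0 < δ l := fun l => pow_pos (by norm_num) l
  have hδ3 : ∀ l, 3 * δ (l + 1) = δ l := by
    intro l
    simp only [hδdef, pow_succ]
    ring
  -- finite nets
  have hnet : ∀ l : ℕ, ∃ T : Finset X, ∀ x : X, ∃ i ∈ T, dist x i < δ l := by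
    intro l
    have h1 : TotallyBounded (Set.univ : Set X) := isCompact_univ.totallyBounded
    obtain ⟨t, htf, hcov⟩ := Metric.totallyBounded_iff.mp h1 (δ l) (hδpos l)
    refine ⟨htf.toFinset, fun x => ?_⟩
    have h2 := hcov (Set.mem_univ x)
    rw [Set.mem_iUnion₂] at h2
    obtain ⟨y, hy, hxy⟩ := h2
    exact ⟨y, htf.mem_toFinset.mpr hy, by simpa [Metric.mem_ball] using hxy⟩
  choose T hT using hnet
  -- partition of unity
  set θ : ℕ → X → X → ℝ := fun l i x => max (δ l - dist x i) 0 with hθdef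
  have hθcont : ∀ l i, Continuous (θ l i) := fun l i =>
    (continuous_const.sub (continuous_id.dist continuous_const)).max continuous_const
  have hθnonneg : ∀ l i x, 0 ≤ θ l i x := fun l i x => le_max_right _ _
  set num : ℕ → X → ℝ := fun l x => ∑ i ∈ T l, θ l i x with hnumdef
  have hnumpos : ∀ l x, 0 < num l x := by
    intro l x
    obtain ⟨i, hi, hd⟩ := hT l x
    refine Finset.sum_pos' (fun j _ => hθnonneg l j x) ⟨i, hi, ?_⟩
    simp only [hθdef]
    exact lt_max_iff.mpr (Or.inl (sub_pos.mpr hd))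
  set ψ : ℕ → X → X → ℝ := fun l i x => θ l i x / num l x with hψdef
  have hψcont : ∀ l i, Continuous (fun x => ψ l i x) := fun l i =>
    (hθcont l i).div (continuous_finset_sum _ fun j _ => hθcont l j)
      (fun x => (hnumpos l x).ne')
  have hψnonneg : ∀ l i x, 0 ≤ ψ l i x := fun l i x =>
    div_nonneg (hθnonneg l i x) (hnumpos l x).le
  have hψsum : ∀ l x, ∑ i ∈ T l, ψ l i x = 1 := by
    intro l x
    rw [← Finset.sum_div]
    exact div_self (hnumpos l x).ne'
  have hψsupp : ∀ l i x, ψ l i x ≠ 0 → dist x i < δ l := by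
    intro l i x h
    by_contra hd
    push_neg at hd
    apply h
    simp only [hψdef, hθdef]
    rw [max_eq_right (by linarith : δ l - dist x i ≤ 0), zero_div]
  -- the local hulls
  set Hull : X → ℝ → Set (Euc k) :=
    fun x r => closure (convexHull ℝ (⋃ x' ∈ closedBall x r, F x')) with hHdef
  have hHullne : ∀ (x : X) (r : ℝ), 0 ≤ r → (Hull x r).Nonempty := by
    intro x r hr
    obtain ⟨z, hz⟩ := hne x
    exact ⟨z, subset_closure (subset_convexHull ℝ _
      (Set.mem_biUnion (mem_closedBall_self hr) hz))⟩
  have hHullsub : ∀ (x : X) (r : ℝ), Hull x r ⊆ closedBall 0 K := by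
    intro x r
    refine closure_minimal (convexHull_min ?_ (convex_closedBall _ _)) isClosed_closedBall
    intro z hz
    rw [Set.mem_iUnion₂] at hz
    obtain ⟨x', _, hzx⟩ := hz
    exact mem_closedBall_zero_iff.mpr (hbd x' z hzx)
  have hHullconv : ∀ (x : X) (r : ℝ), Convex ℝ (Hull x r) :=
    fun x r => (convex_convexHull ℝ _).closure
  have hHullcomp : ∀ (x : X) (r : ℝ), IsCompact (Hull x r) :=
    fun x r => (isCompact_closedBall (0 : Euc k) K).of_isClosed_subset
      isClosed_closure (hHullsub x r)
  have hHullmono : ∀ (x y : X) (r r' : ℝ), closedBall x r ⊆ closedBall y r' →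
      Hull x r ⊆ Hull y r' := fun x y r r' h =>
    closure_mono (convexHull_mono (Set.biUnion_mono h fun _ _ => subset_rfl))
  have hFHull : ∀ (x : X) (r : ℝ), 0 ≤ r → F x ⊆ Hull x r := by
    intro x r hr z hz
    exact subset_closure (subset_convexHull ℝ _ (Set.mem_biUnion (mem_closedBall_self hr) hz))
  -- the moving convex compact sets
  set C : ℕ → X → Set (Euc k) := fun l i => Hull i (2 * δ l) with hCdef
  have hCne : ∀ l i, (C l i).Nonempty := fun l i =>
    hHullne i _ (by positivity)
  have hCsub : ∀ l i, C l i ⊆ closedBall 0 K := fun l i => hHullsub i _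
  have hCconv : ∀ l i, Convex ℝ (C l i) := fun l i => hHullconv i _
  have hCcomp : ∀ l i, IsCompact (C l i) := fun l i => hHullcomp i _
  set G : ℕ → X → Set (Euc k) := fun l x => ∑ i ∈ T l, ψ l i x • C l i with hGdef
  have hGconv : ∀ l x, Convex ℝ (G l x) :=
    fun l x => convex_finsetSum fun i _ => (hCconv l i).smul _
  have hGcomp : ∀ l x, IsCompact (G l x) :=
    fun l x => isCompact_finsetSum fun i _ => (hCcomp l i).smul _
  have hGcl : ∀ l x, IsClosed (G l x) := fun l x => (hGcomp l x).isClosed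
  have hGsubK : ∀ l x, G l x ⊆ closedBall 0 K := by
    intro l x
    have h1 := sum_smul_subset_pointwise (T := T l) (ψ := fun i => ψ l i x)
      (A := fun i => C l i) (D := closedBall 0 K)
      (fun i _ => hψnonneg l i x) (fun i hi => hCne l i)
      (convex_closedBall _ _) (nonempty_closedBall.mpr hK.le)
      (fun i _ _ => hCsub l i)
    rw [hψsum, one_smul] at h1
    exact h1
  have hGlow : ∀ l x, Hull x (δ l) ⊆ G l x := by
    intro l x z hz
    have h1 : (∑ i ∈ T l, ψ l i x) • z ∈ G l x := by
      refine sum_smul_mem_pointwise (fun i _ => hCne l i) z ?_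
      intro i _ hψi
      refine hHullmono x i _ _ (closedBall_subset_closedBall' ?_) hz
      have := hψsupp l i x hψi
      linarith
    rw [hψsum, one_smul] at h1
    exact h1
  have hGup : ∀ l x, G l x ⊆ Hull x (3 * δ l) := by
    intro l x
    have h1 := sum_smul_subset_pointwise (T := T l) (ψ := fun i => ψ l i x)
      (A := fun i => C l i) (D := Hull x (3 * δ l))
      (fun i _ => hψnonneg l i x) (fun i hi => hCne l i)
      (hHullconv x _) (hHullne x _ (by positivity))
      (fun i _ hψi => by
        refine hHullmono i x _ _ (closedBall_subset_closedBall' ?_)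
        have := hψsupp l i x hψi
        rw [dist_comm]
        linarith)
    rw [hψsum, one_smul] at h1
    exact h1
  have hFG : ∀ l x, F x ⊆ G l x :=
    fun l x => (hFHull x (δ l) (hδpos l).le).trans (hGlow l x)
  have hGne : ∀ l x, (G l x).Nonempty := fun l x => (hne x).mono (hFG l x)
  have hnest : ∀ l x, G (l + 1) x ⊆ G l x := by
    intro l x
    refine (hGup (l + 1) x).trans ?_
    rw [hδ3 l]
    exact hGlow l x
  -- pairing estimate
  have hpair : ∀ l (x y : X), ∀ z ∈ G l x, ∃ w ∈ G l y,
      ‖z - w‖ ≤ ∑ i ∈ T l, |ψ l i x - ψ l i y| * K := by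
    intro l x y z hz
    exact sum_smul_pair (fun i => ψ l i x) (fun i => ψ l i y) (fun i => C l i)
      (fun i _ c hc => mem_closedBall_zero_iff.mp (hCsub l i hc)) hz
  -- upper semicontinuity of F
  have husc : ∀ (x : X) (γ : ℝ), 0 < γ → ∃ ρ : ℝ, 0 < ρ ∧
      ∀ x', dist x' x ≤ ρ → F x' ⊆ cthickening γ (F x) := by
    intro x γ hγ
    by_contra hcon
    push_neg at hcon
    have hseq : ∀ n : ℕ, ∃ x', dist x' x ≤ 1 / (n + 1) ∧
        ∃ z ∈ F x', z ∉ cthickening γ (F x) := by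
      intro n
      obtain ⟨x', h1, h2⟩ := hcon (1 / (n + 1)) (by positivity)
      rw [Set.not_subset] at h2
      obtain ⟨z, hz1, hz2⟩ := h2
      exact ⟨x', h1, z, hz1, hz2⟩
    choose xs hxs zs hzs1 hzs2 using hseq
    have hxs_t : Tendsto xs atTop (𝓝 x) := by
      rw [tendsto_iff_dist_tendsto_zero]
      refine squeeze_zero (fun n => dist_nonneg) hxs ?_
      exact tendsto_one_div_add_atTop_nhds_zero_nat
    have hzsK : ∀ n, zs n ∈ closedBall (0 : Euc k) K := fun n =>
      mem_closedBall_zero_iff.mpr (hbd _ _ (hzs1 n))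
    obtain ⟨z, _, φ, hφmono, hφt⟩ :=
      (isCompact_closedBall (0 : Euc k) K).tendsto_subseq hzsK
    have hzF : z ∈ F x := hgraph x (xs ∘ φ) (zs ∘ φ) z
      (hxs_t.comp hφmono.tendsto_atTop) (fun n => hzs1 (φ n)) hφt
    have hev : ∀ᶠ n in atTop, dist (zs (φ n)) z < γ :=
      (Metric.tendsto_nhds.mp hφt) γ hγ
    obtain ⟨n, hn⟩ := hev.exists
    exact hzs2 (φ n) (mem_cthickening_of_dist_le _ z γ _ hzF hn.le)
  -- the intersection of the G's is F
  have hGint : ∀ x, (⋂ l, G l x) ⊆ F x := by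
    intro x z hz
    rw [Set.mem_iInter] at hz
    have hzdist : ∀ γ : ℝ, 0 < γ → infDist z (F x) ≤ γ := by
      intro γ hγ
      obtain ⟨ρ, hρpos, hρ⟩ := husc x γ hγ
      have hδt : Tendsto (fun l => 3 * δ l) atTop (𝓝 0) := by
        have h0 : Tendsto δ atTop (𝓝 0) :=
          tendsto_pow_atTop_nhds_zero_of_lt_one (by norm_num) (by norm_num)
        have h1 := h0.const_mul (3:ℝ)
        rwa [mul_zero] at h1
      obtain ⟨l, hl⟩ := (hδt.eventually_lt_const hρpos).exists
      have h1 : G l x ⊆ cthickening γ (F x) := by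
        refine (hGup l x).trans (closure_minimal (convexHull_min ?_
          ((hconv x).cthickening γ)) isClosed_cthickening)
        intro w hw
        rw [Set.mem_iUnion₂] at hw
        obtain ⟨x', hx', hwx'⟩ := hw
        refine hρ x' ?_ hwx'
        rw [mem_closedBall] at hx'
        linarith
      have h2 := h1 (hz l)
      rw [mem_cthickening_iff] at h2
      exact ENNReal.toReal_le_of_le_ofReal hγ.le h2
    have h0 : infDist z (F x) = 0 := by
      refine le_antisymm ?_ infDist_nonneg
      refine le_of_forall_pos_le_add fun γ hγ => ?_
      simpa using hzdist γ hγ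
    have h1 := (mem_closure_iff_infDist_zero (hne x)).mpr h0
    rwa [(hcomp x).isClosed.closure_eq] at h1
  -- the parametrization
  set f : ℕ → X → (closedBall (0 : Euc k) 1 : Set (Euc k)) → Euc k :=
    fun l x u => projC (G l x) (K • (u : Euc k)) with hfdef
  have hfmem : ∀ l x u, f l x u ∈ G l x := fun l x u =>
    (projC_spec (hGne l x) (hGcl l x) (hGconv l x) _).1
  have hrange : ∀ l x, Set.range (f l x) = G l x := by
    intro l x
    refine Set.Subset.antisymm ?_ ?_
    · rintro _ ⟨u, rfl⟩
      exact hfmem l x u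
    · intro z hz
      have hzK : ‖z‖ ≤ K := mem_closedBall_zero_iff.mp (hGsubK l x hz)
      have hu : ‖K⁻¹ • z‖ ≤ 1 := by
        rw [norm_smul, Real.norm_eq_abs, abs_of_pos (inv_pos.mpr hK)]
        calc K⁻¹ * ‖z‖ ≤ K⁻¹ * K := mul_le_mul_of_nonneg_left hzK (inv_pos.mpr hK).le
          _ = 1 := inv_mul_cancel₀ hK.ne'
      refine ⟨⟨K⁻¹ • z, mem_closedBall_zero_iff.mpr hu⟩, ?_⟩
      show projC (G l x) (K • K⁻¹ • z) = z
      rw [smul_smul, mul_inv_cancel₀ hK.ne', one_smul]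
      exact projC_eq_self (hGne l x) (hGcl l x) (hGconv l x) hz
  have hfbd : ∀ l x u, ‖f l x u‖ ≤ K := fun l x u =>
    mem_closedBall_zero_iff.mp (hGsubK l x (hfmem l x u))
  -- continuity
  have hfcont : ∀ l, Continuous
      (fun q : X × (closedBall (0 : Euc k) 1 : Set (Euc k)) => f l q.1 q.2) := by
    intro l
    rw [Metric.continuous_iff]
    rintro ⟨x₀, u₀⟩ ε hε
    set ρf : X → ℝ := fun x => ∑ i ∈ T l, |ψ l i x - ψ l i x₀| * K with hρfdef
    have hρf0 : ρf x₀ = 0 := by simp [hρfdef]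
    have hρfnonneg : ∀ x, 0 ≤ ρf x := fun x =>
      Finset.sum_nonneg fun i _ => mul_nonneg (abs_nonneg _) hK.le
    have hρfcont : Continuous ρf := continuous_finset_sum _ fun i _ =>
      (((hψcont l i).sub continuous_const).abs.mul continuous_const)
    have hev : ∀ᶠ x in 𝓝 x₀, ρf x < ε ^ 2 / (16 * (K + 1)) := by
      have h1 : Tendsto ρf (𝓝 x₀) (𝓝 0) := by
        have := hρfcont.tendsto x₀
        rwa [hρf0] at this
      exact h1.eventually_lt_const (div_pos (pow_pos hε 2) (by linarith))
    rw [Metric.eventually_nhds_iff] at hev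
    obtain ⟨δ₁, hδ₁pos, hδ₁⟩ := hev
    refine ⟨min δ₁ (ε / (2 * K + 2)), lt_min hδ₁pos (div_pos hε (by linarith)), ?_⟩
    rintro ⟨x, u⟩ hq
    have hdx : dist x x₀ < δ₁ := by
      have h1 : dist x x₀ ≤ dist ((x, u) : X × _) (x₀, u₀) := by
        rw [Prod.dist_eq]
        exact le_max_left _ _
      exact lt_of_le_of_lt h1 (lt_of_lt_of_le hq (min_le_left _ _))
    have hdu : dist u u₀ < ε / (2 * K + 2) := by
      have h1 : dist u u₀ ≤ dist ((x, u) : X × _) (x₀, u₀) := by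
        rw [Prod.dist_eq]
        exact le_max_right _ _
      exact lt_of_le_of_lt h1 (lt_of_lt_of_le hq (min_le_right _ _))
    have hρx : ρf x < ε ^ 2 / (16 * (K + 1)) := hδ₁ hdx
    set v : Euc k := K • (u : Euc k) with hvdef
    set v₀ : Euc k := K • (u₀ : Euc k) with hv₀def
    have hCD : ∀ z ∈ G l x, ∃ w ∈ G l x₀, ‖z - w‖ ≤ ρf x := fun z hz => hpair l x x₀ z hz
    have hDC : ∀ z ∈ G l x₀, ∃ w ∈ G l x, ‖z - w‖ ≤ ρf x := by
      intro z hz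
      obtain ⟨w, hw, hwd⟩ := hpair l x₀ x z hz
      refine ⟨w, hw, hwd.trans (le_of_eq ?_)⟩
      exact Finset.sum_congr rfl fun i _ => by rw [abs_sub_comm]
    have hest := projC_estimate (hGne l x) (hGcl l x) (hGconv l x)
      (hGne l x₀) (hGcl l x₀) (hGconv l x₀) v v₀ hCD hDC
    have hvK : ‖v‖ ≤ K := by
      rw [hvdef, norm_smul, Real.norm_eq_abs, abs_of_pos hK]
      have h1 : ‖(u : Euc k)‖ ≤ 1 := mem_closedBall_zero_iff.mp u.2
      calc K * ‖(u : Euc k)‖ ≤ K * 1 := mul_le_mul_of_nonneg_left h1 hK.le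
        _ = K := mul_one K
    have hv₀K : ‖v₀‖ ≤ K := by
      rw [hv₀def, norm_smul, Real.norm_eq_abs, abs_of_pos hK]
      have h1 : ‖(u₀ : Euc k)‖ ≤ 1 := mem_closedBall_zero_iff.mp u₀.2
      calc K * ‖(u₀ : Euc k)‖ ≤ K * 1 := mul_le_mul_of_nonneg_left h1 hK.le
        _ = K := mul_one K
    have hva : ‖v - projC (G l x) v‖ ≤ 2 * K := by
      have h1 : ‖projC (G l x) v‖ ≤ K :=
        mem_closedBall_zero_iff.mp (hGsubK l x ((projC_spec (hGne l x) (hGcl l x) (hGconv l x) v).1))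
      calc ‖v - projC (G l x) v‖ ≤ ‖v‖ + ‖projC (G l x) v‖ := norm_sub_le _ _
        _ ≤ 2 * K := by linarith
    have hvb : ‖v₀ - projC (G l x₀) v₀‖ ≤ 2 * K := by
      have h1 : ‖projC (G l x₀) v₀‖ ≤ K :=
        mem_closedBall_zero_iff.mp
          (hGsubK l x₀ ((projC_spec (hGne l x₀) (hGcl l x₀) (hGconv l x₀) v₀).1))
      calc ‖v₀ - projC (G l x₀) v₀‖ ≤ ‖v₀‖ + ‖projC (G l x₀) v₀‖ := norm_sub_le _ _
        _ ≤ 2 * K := by linarith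
    set m : ℝ := ‖projC (G l x) v - projC (G l x₀) v₀‖ with hmdef
    have hm2 : m ^ 2 ≤ ρf x * (4 * K) + ‖v - v₀‖ * m := by
      have h1 : ρf x * (‖v - projC (G l x) v‖ + ‖v₀ - projC (G l x₀) v₀‖) ≤ ρf x * (4 * K) := by
        refine mul_le_mul_of_nonneg_left ?_ (hρfnonneg x)
        linarith
      calc m ^ 2 ≤ ρf x * (‖v - projC (G l x) v‖ + ‖v₀ - projC (G l x₀) v₀‖)
            + ‖v - v₀‖ * m := hest
        _ ≤ ρf x * (4 * K) + ‖v - v₀‖ * m := by linarith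
    have hvv : ‖v - v₀‖ < ε / 2 := by
      have h1 : ‖v - v₀‖ = K * ‖(u : Euc k) - (u₀ : Euc k)‖ := by
        rw [hvdef, hv₀def, ← smul_sub, norm_smul, Real.norm_eq_abs, abs_of_pos hK]
      have h2 : ‖(u : Euc k) - (u₀ : Euc k)‖ < ε / (2 * K + 2) := by
        rw [← dist_eq_norm]
        rw [← Subtype.dist_eq]
        exact hdu
      rw [h1]
      have h3 : K * ‖(u : Euc k) - (u₀ : Euc k)‖ < K * (ε / (2 * K + 2)) :=
        mul_lt_mul_of_pos_left h2 hK
      have h4 : K * (ε / (2 * K + 2)) ≤ ε / 2 := by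
        rw [mul_comm, div_mul_eq_mul_div, div_le_div_iff₀ (by linarith) (by norm_num)]
        nlinarith [hε.le]
      linarith
    have hρ4K : ρf x * (4 * K) < ε ^ 2 / 4 := by
      have h1 : ρf x * (4 * K) < ε ^ 2 / (16 * (K + 1)) * (4 * K) :=
        mul_lt_mul_of_pos_right hρx (by linarith)
      have h2 : ε ^ 2 / (16 * (K + 1)) * (4 * K) ≤ ε ^ 2 / 4 := by
        rw [div_mul_eq_mul_div, div_le_div_iff₀ (by linarith) (by norm_num)]
        nlinarith [sq_nonneg ε]
      linarith
    have hmfin : m < ε := by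
      by_contra hcon
      push_neg at hcon
      have h1 : ε ^ 2 ≤ m ^ 2 := pow_le_pow_left₀ hε.le hcon 2
      have h2 : 0 ≤ ‖v - v₀‖ := norm_nonneg _
      nlinarith
    show dist (f l x u) (f l x₀ u₀) < ε
    rw [dist_eq_norm]
    exact hmfin
  -- conclusion
  refine ⟨f, hfcont, ?_, ?_, hfbd, ?_⟩
  · intro l x
    constructor
    · rw [hrange]
      exact hFG (l + 1) x
    · rw [hrange, hrange]
      exact hnest l x
  · intro l x
    rw [hrange]
    exact ⟨hGconv l x, hGcomp l x⟩
  · intro x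
    simp only [hrange]
    exact Set.Subset.antisymm (hGint x) (Set.subset_iInter fun l => hFG l x)

set_option maxHeartbeats 2000000 in
/-- Approximation theorem: any SAM admits a sequence of continuous single-valued
parametrizations `f^(l) : ℝ^d × S × U → ℝ^k` whose images decrease to the SAM. -/
theorem sam_approximation
    (d₁ d₂ k : ℕ) (hd₁ : 0 < d₁) (hd₂ : 0 < d₂) (hk : 0 < k)
    (S : Type) [MetricSpace S] [CompactSpace S]
    (F : (Euc d₁ × Euc d₂) → S → Set (Euc k))
    (hFne : ∀ p s, (F p s).Nonempty)
    (hFconv : ∀ p s, Convex ℝ (F p s))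
    (hFcomp : ∀ p s, IsCompact (F p s))
    (hFgraph : ∀ (p : Euc d₁ × Euc d₂) (s : S) (pn : ℕ → Euc d₁ × Euc d₂) (sn : ℕ → S)
      (zn : ℕ → Euc k) (z : Euc k),
      Tendsto pn atTop (𝓝 p) → Tendsto sn atTop (𝓝 s) →
      (∀ n, zn n ∈ F (pn n) (sn n)) → Tendsto zn atTop (𝓝 z) → z ∈ F p s)
    (K : ℝ) (hK : 0 < K)
    (hFbd : ∀ p s, ∀ z ∈ F p s, ‖z‖ ≤ K * (1 + ‖p‖)) :
    ∃ (f : ℕ → (Euc d₁ × Euc d₂) → S → (closedBall (0 : Euc k) 1 : Set (Euc k)) → Euc k)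
      (Kl : ℕ → ℝ),
      -- continuity of each parametrization
      (∀ l : ℕ, Continuous (fun q :
          (Euc d₁ × Euc d₂) × S × (closedBall (0 : Euc k) 1 : Set (Euc k)) =>
          f l q.1 q.2.1 q.2.2)) ∧
      -- (i) nesting of the images around F, and images convex compact
      (∀ l p s, F p s ⊆ Set.range (f (l + 1) p s) ∧
        Set.range (f (l + 1) p s) ⊆ Set.range (f l p s)) ∧
      (∀ l p s, Convex ℝ (Set.range (f l p s)) ∧ IsCompact (Set.range (f l p s))) ∧
      -- (ii) growth bounds
      (∀ l, 0 < Kl l) ∧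
      (∀ l p s u, ‖f l p s u‖ ≤ Kl l * (1 + ‖p‖)) ∧
      -- intersection of the images recovers F
      (∀ p s, (⋂ l : ℕ, Set.range (f l p s)) = F p s) := by
  classical
  rcases isEmpty_or_nonempty S with hS | hS
  · refine ⟨fun _ _ _ _ => 0, fun _ => 1, ?_, ?_, ?_, ?_, ?_, ?_⟩
    · intro l; exact continuous_const
    · intro l p s; exact (IsEmpty.false s).elim
    · intro l p s; exact (IsEmpty.false s).elim
    · intro l; norm_num
    · intro l p s; exact (IsEmpty.false s).elim
    · intro p s; exact (IsEmpty.false s).elim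
  -- the compactified base space
  set B : Set (Euc d₁ × Euc d₂) := closedBall 0 1 with hBdef
  haveI hBcs : CompactSpace ↥B := isCompact_iff_compactSpace.mp (isCompact_closedBall _ _)
  haveI hBne : Nonempty ↥B := ⟨⟨0, mem_closedBall_self zero_le_one⟩⟩
  have hpos : ∀ q : Euc d₁ × Euc d₂, ‖q‖ < 1 → 0 < 1 - ‖q‖ := fun q h => by linarith
  -- the compactified set-valued map
  set Ft : ↥B × S → Set (Euc k) := fun x =>
    if ‖(x.1 : Euc d₁ × Euc d₂)‖ < 1 then
      (1 - ‖(x.1 : Euc d₁ × Euc d₂)‖) •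
        F ((1 - ‖(x.1 : Euc d₁ × Euc d₂)‖)⁻¹ • (x.1 : Euc d₁ × Euc d₂)) x.2
    else closedBall 0 K with hFtdef
  have hFt_int : ∀ x : ↥B × S, ‖(x.1 : Euc d₁ × Euc d₂)‖ < 1 →
      Ft x = (1 - ‖(x.1 : Euc d₁ × Euc d₂)‖) •
        F ((1 - ‖(x.1 : Euc d₁ × Euc d₂)‖)⁻¹ • (x.1 : Euc d₁ × Euc d₂)) x.2 := by
    intro x h
    simp only [hFtdef]
    rw [if_pos h]
  have hFt_bdry : ∀ x : ↥B × S, ¬ (‖(x.1 : Euc d₁ × Euc d₂)‖ < 1) →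
      Ft x = closedBall 0 K := by
    intro x h
    simp only [hFtdef]
    rw [if_neg h]
  -- the embedding of the original base space
  have hmemB : ∀ p : Euc d₁ × Euc d₂, (1 + ‖p‖)⁻¹ • p ∈ B := by
    intro p
    rw [hBdef, mem_closedBall_zero_iff, norm_smul, Real.norm_eq_abs,
      abs_of_pos (by positivity : (0:ℝ) < (1 + ‖p‖)⁻¹)]
    have h1 : ‖p‖ ≤ 1 + ‖p‖ := by linarith [norm_nonneg p]
    calc (1 + ‖p‖)⁻¹ * ‖p‖ ≤ (1 + ‖p‖)⁻¹ * (1 + ‖p‖) :=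
          mul_le_mul_of_nonneg_left h1 (by positivity)
      _ = 1 := inv_mul_cancel₀ (by positivity)
  set ι : (Euc d₁ × Euc d₂) → S → ↥B × S := fun p s => (⟨(1 + ‖p‖)⁻¹ • p, hmemB p⟩, s)
    with hιdef
  have hnorm1 : ∀ p : Euc d₁ × Euc d₂, ‖(1 + ‖p‖)⁻¹ • p‖ = ‖p‖ / (1 + ‖p‖) := by
    intro p
    rw [norm_smul, Real.norm_eq_abs, abs_of_pos (by positivity : (0:ℝ) < (1 + ‖p‖)⁻¹),
      inv_mul_eq_div]
  have hlt1 : ∀ p : Euc d₁ × Euc d₂, ‖(1 + ‖p‖)⁻¹ • p‖ < 1 := by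
    intro p
    rw [hnorm1, div_lt_one (by positivity)]
    linarith
  have hone_sub : ∀ p : Euc d₁ × Euc d₂, 1 - ‖(1 + ‖p‖)⁻¹ • p‖ = (1 + ‖p‖)⁻¹ := by
    intro p
    rw [hnorm1]
    have h1 : (0:ℝ) < 1 + ‖p‖ := by positivity
    field_simp
    ring
  have hFtι : ∀ p s, Ft (ι p s) = (1 + ‖p‖)⁻¹ • F p s := by
    intro p s
    rw [hFt_int (ι p s) (hlt1 p)]
    show (1 - ‖(1 + ‖p‖)⁻¹ • p‖) • F ((1 - ‖(1 + ‖p‖)⁻¹ • p‖)⁻¹ • (1 + ‖p‖)⁻¹ • p) s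
      = (1 + ‖p‖)⁻¹ • F p s
    rw [hone_sub, inv_inv, smul_smul, mul_inv_cancel₀ (by positivity : (1:ℝ) + ‖p‖ ≠ 0),
      one_smul]
  -- hypotheses for the compactified map
  have hFtne : ∀ x, (Ft x).Nonempty := by
    intro x
    by_cases h : ‖(x.1 : Euc d₁ × Euc d₂)‖ < 1
    · rw [hFt_int x h]
      exact (hFne _ _).smul_set
    · rw [hFt_bdry x h]
      exact nonempty_closedBall.mpr hK.le
  have hFtconv : ∀ x, Convex ℝ (Ft x) := by
    intro x
    by_cases h : ‖(x.1 : Euc d₁ × Euc d₂)‖ < 1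
    · rw [hFt_int x h]
      exact (hFconv _ _).smul _
    · rw [hFt_bdry x h]
      exact convex_closedBall _ _
  have hFtcomp : ∀ x, IsCompact (Ft x) := by
    intro x
    by_cases h : ‖(x.1 : Euc d₁ × Euc d₂)‖ < 1
    · rw [hFt_int x h]
      exact (hFcomp _ _).smul _
    · rw [hFt_bdry x h]
      exact isCompact_closedBall _ _
  have hFtbd : ∀ x, ∀ z ∈ Ft x, ‖z‖ ≤ K := by
    intro x z hz
    by_cases h : ‖(x.1 : Euc d₁ × Euc d₂)‖ < 1
    · rw [hFt_int x h] at hz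
      obtain ⟨w, hw, rfl⟩ := Set.mem_smul_set.mp hz
      rw [norm_smul, Real.norm_eq_abs, abs_of_pos (hpos _ h)]
      have hb := hFbd _ x.2 w hw
      have hnp : ‖(1 - ‖(x.1 : Euc d₁ × Euc d₂)‖)⁻¹ • (x.1 : Euc d₁ × Euc d₂)‖
          = ‖(x.1 : Euc d₁ × Euc d₂)‖ / (1 - ‖(x.1 : Euc d₁ × Euc d₂)‖) := by
        rw [norm_smul, Real.norm_eq_abs, abs_of_pos (inv_pos.mpr (hpos _ h)), inv_mul_eq_div]
      rw [hnp] at hb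
      have h1 : (1:ℝ) + ‖(x.1 : Euc d₁ × Euc d₂)‖ / (1 - ‖(x.1 : Euc d₁ × Euc d₂)‖)
          = (1 - ‖(x.1 : Euc d₁ × Euc d₂)‖)⁻¹ := by
        have h2 := hpos _ h
        field_simp
        ring
      rw [h1] at hb
      calc (1 - ‖(x.1 : Euc d₁ × Euc d₂)‖) * ‖w‖
          ≤ (1 - ‖(x.1 : Euc d₁ × Euc d₂)‖) * (K * (1 - ‖(x.1 : Euc d₁ × Euc d₂)‖)⁻¹) :=
            mul_le_mul_of_nonneg_left hb (hpos _ h).le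
        _ = K := by
            have h2 := (hpos _ h).ne'
            field_simp
    · rw [hFt_bdry x h] at hz
      exact mem_closedBall_zero_iff.mp hz
  have hFtgraph : ∀ (x : ↥B × S) (xn : ℕ → ↥B × S) (zn : ℕ → Euc k) (z : Euc k),
      Tendsto xn atTop (𝓝 x) → (∀ n, zn n ∈ Ft (xn n)) → Tendsto zn atTop (𝓝 z) →
      z ∈ Ft x := by
    intro x xn zn z hxn hzn hz
    have hq : Tendsto (fun n => ((xn n).1 : Euc d₁ × Euc d₂)) atTop
        (𝓝 (x.1 : Euc d₁ × Euc d₂)) :=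
      ((continuous_subtype_val.comp continuous_fst).tendsto x).comp hxn
    have hs : Tendsto (fun n => (xn n).2) atTop (𝓝 x.2) :=
      (continuous_snd.tendsto x).comp hxn
    by_cases h : ‖(x.1 : Euc d₁ × Euc d₂)‖ < 1
    · have hev : ∀ᶠ n in atTop, ‖((xn n).1 : Euc d₁ × Euc d₂)‖ < 1 :=
        hq.norm.eventually_lt_const h
      obtain ⟨N, hN⟩ := eventually_atTop.mp hev
      set cn : ℕ → ℝ := fun n => 1 - ‖((xn (n + N)).1 : Euc d₁ × Euc d₂)‖ with hcndef
      have hlt : ∀ n : ℕ, ‖((xn (n + N)).1 : Euc d₁ × Euc d₂)‖ < 1 :=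
        fun n => hN (n + N) (by omega)
      have hcnpos : ∀ n, 0 < cn n := fun n => hpos _ (hlt n)
      set pn : ℕ → Euc d₁ × Euc d₂ :=
        fun n => (cn n)⁻¹ • ((xn (n + N)).1 : Euc d₁ × Euc d₂) with hpndef
      set wn : ℕ → Euc k := fun n => (cn n)⁻¹ • zn (n + N) with hwndef
      have hwn : ∀ n, wn n ∈ F (pn n) ((xn (n + N)).2) := by
        intro n
        have h1 := hzn (n + N)
        rw [hFt_int _ (hlt n)] at h1
        exact (Set.mem_smul_set_iff_inv_smul_mem₀ (hcnpos n).ne' _ _).mp h1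
      have hqshift : Tendsto (fun n => ((xn (n + N)).1 : Euc d₁ × Euc d₂)) atTop
          (𝓝 (x.1 : Euc d₁ × Euc d₂)) := hq.comp (tendsto_add_atTop_nat N)
      have hcn : Tendsto cn atTop (𝓝 (1 - ‖(x.1 : Euc d₁ × Euc d₂)‖)) :=
        tendsto_const_nhds.sub hqshift.norm
      have hcninv : Tendsto (fun n => (cn n)⁻¹) atTop
          (𝓝 (1 - ‖(x.1 : Euc d₁ × Euc d₂)‖)⁻¹) := hcn.inv₀ (hpos _ h).ne'
      have hpn : Tendsto pn atTop
          (𝓝 ((1 - ‖(x.1 : Euc d₁ × Euc d₂)‖)⁻¹ • (x.1 : Euc d₁ × Euc d₂))) :=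
        hcninv.smul hqshift
      have hwn_t : Tendsto wn atTop (𝓝 ((1 - ‖(x.1 : Euc d₁ × Euc d₂)‖)⁻¹ • z)) :=
        hcninv.smul (hz.comp (tendsto_add_atTop_nat N))
      have hsn : Tendsto (fun n => (xn (n + N)).2) atTop (𝓝 x.2) :=
        hs.comp (tendsto_add_atTop_nat N)
      have hmem := hFgraph _ x.2 pn _ wn _ hpn hsn hwn hwn_t
      rw [hFt_int x h, Set.mem_smul_set_iff_inv_smul_mem₀ (hpos _ h).ne']
      exact hmem
    · rw [hFt_bdry x h, mem_closedBall_zero_iff]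
      have h1 : ∀ n, ‖zn n‖ ≤ K := fun n => hFtbd _ _ (hzn n)
      exact le_of_tendsto hz.norm (Filter.Eventually.of_forall h1)
  -- apply the compact-base theorem
  obtain ⟨g, hgcont, hgnest, hgcc, hgbd, hgint⟩ :=
    sam_aux k (↥B × S) Ft hFtne hFtconv hFtcomp hFtgraph K hK hFtbd
  have hscale : ∀ p s, (1 + ‖p‖) • Ft (ι p s) = F p s := by
    intro p s
    rw [hFtι p s, smul_smul, mul_inv_cancel₀ (by positivity : (1:ℝ) + ‖p‖ ≠ 0), one_smul]
  refine ⟨fun l p s u => (1 + ‖p‖) • g l (ι p s) u, fun _ => K, ?_, ?_, ?_, ?_, ?_, ?_⟩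
  · -- continuity
    intro l
    have hι1 : Continuous (fun q : (Euc d₁ × Euc d₂) × S ×
        (closedBall (0 : Euc k) 1 : Set (Euc k)) => (1 + ‖q.1‖)⁻¹ • q.1) := by
      refine Continuous.smul (f := fun q : (Euc d₁ × Euc d₂) × S ×
          (closedBall (0 : Euc k) 1 : Set (Euc k)) => ((1 + ‖q.1‖)⁻¹ : ℝ))
        (g := fun q : (Euc d₁ × Euc d₂) × S ×
          (closedBall (0 : Euc k) 1 : Set (Euc k)) => q.1) ?_ continuous_fst
      exact ((continuous_const.add (continuous_norm.comp continuous_fst)).inv₀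
        (fun q => (by positivity : (0:ℝ) < 1 + ‖q.1‖).ne'))
    have hι : Continuous (fun q : (Euc d₁ × Euc d₂) × S ×
        (closedBall (0 : Euc k) 1 : Set (Euc k)) =>
        ((ι q.1 q.2.1, q.2.2) : (↥B × S) × (closedBall (0 : Euc k) 1 : Set (Euc k)))) := by
      refine Continuous.prodMk (Continuous.prodMk ?_ ?_) ?_
      · exact hι1.subtype_mk _
      · exact continuous_fst.comp continuous_snd
      · exact continuous_snd.comp continuous_snd
    exact (continuous_const.add (continuous_norm.comp continuous_fst)).smul
      ((hgcont l).comp hι)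
  · -- nesting
    intro l p s
    have hr : ∀ l' : ℕ, Set.range (fun u : (closedBall (0 : Euc k) 1 : Set (Euc k)) =>
        (1 + ‖p‖) • g l' (ι p s) u) = (1 + ‖p‖) • Set.range (g l' (ι p s)) := by
      intro l'
      ext z
      constructor
      · rintro ⟨u, rfl⟩
        exact Set.smul_mem_smul_set (Set.mem_range_self u)
      · intro hz
        obtain ⟨w, hw, rfl⟩ := Set.mem_smul_set.mp hz
        obtain ⟨u, rfl⟩ := hw
        exact ⟨u, rfl⟩
    constructor
    · rw [hr]
      calc F p s = (1 + ‖p‖) • Ft (ι p s) := (hscale p s).symm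
        _ ⊆ (1 + ‖p‖) • Set.range (g (l + 1) (ι p s)) :=
            Set.smul_set_mono (hgnest l (ι p s)).1
    · rw [hr, hr]
      exact Set.smul_set_mono (hgnest l (ι p s)).2
  · -- convex and compact
    intro l p s
    have hr : Set.range (fun u : (closedBall (0 : Euc k) 1 : Set (Euc k)) =>
        (1 + ‖p‖) • g l (ι p s) u) = (1 + ‖p‖) • Set.range (g l (ι p s)) := by
      ext z
      constructor
      · rintro ⟨u, rfl⟩
        exact Set.smul_mem_smul_set (Set.mem_range_self u)
      · intro hz
        obtain ⟨w, hw, rfl⟩ := Set.mem_smul_set.mp hz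
        obtain ⟨u, rfl⟩ := hw
        exact ⟨u, rfl⟩
    rw [hr]
    exact ⟨(hgcc l (ι p s)).1.smul _, (hgcc l (ι p s)).2.smul _⟩
  · -- positivity of the constants
    intro l
    exact hK
  · -- growth bound
    intro l p s u
    rw [norm_smul, Real.norm_eq_abs, abs_of_pos (by positivity : (0:ℝ) < 1 + ‖p‖), mul_comm]
    exact mul_le_mul_of_nonneg_right (hgbd l (ι p s) u) (by positivity)
  · -- intersection
    intro p s
    have hr : ∀ l' : ℕ, Set.range (fun u : (closedBall (0 : Euc k) 1 : Set (Euc k)) =>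
        (1 + ‖p‖) • g l' (ι p s) u) = (1 + ‖p‖) • Set.range (g l' (ι p s)) := by
      intro l'
      ext z
      constructor
      · rintro ⟨u, rfl⟩
        exact Set.smul_mem_smul_set (Set.mem_range_self u)
      · intro hz
        obtain ⟨w, hw, rfl⟩ := Set.mem_smul_set.mp hz
        obtain ⟨u, rfl⟩ := hw
        exact ⟨u, rfl⟩
    calc (⋂ l : ℕ, Set.range (fun u : (closedBall (0 : Euc k) 1 : Set (Euc k)) =>
          (1 + ‖p‖) • g l (ι p s) u))
        = ⋂ l : ℕ, (1 + ‖p‖) • Set.range (g l (ι p s)) := by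
          exact Set.iInter_congr hr
      _ = (1 + ‖p‖) • ⋂ l : ℕ, Set.range (g l (ι p s)) :=
          (smul_set_iInter₀ (by positivity : (1:ℝ) + ‖p‖ ≠ 0) _).symm
      _ = (1 + ‖p‖) • Ft (ι p s) := by rw [hgint (ι p s)]
      _ = F p s := hscale p s
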